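/- Let S be a numerical semigroup with gap set G(S), let t be a nonzero element of S, and let f be any function from the nonnegative integers to the integers (an arbitrary arithmetic function). Then the sum over all gaps g in G(S) of (f(g+t) − f(g)) equals the sum of f(a) over all a in the Apéry set Ap(S;t) minus the sum of f(k) for k = 0, 1, …, t−1. -/

import Mathlib

/-- `S` is a numerical semigroup: an additive submonoid of `ℕ` with finite complement. -/
def IsNumericalSemigroup (S : Set ℕ) : Prop :=
  0 ∈ S ∧ (∀ a ∈ S, ∀ b ∈ S, a + b ∈ S) ∧ Sᶜ.Finite

/-- The Apéry set of `S` relative to `t`: the elements `s ∈ S` such that `s - t ∉ S`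
(as integers, i.e. there is no `u ∈ S` with `s = u + t`). -/
def aperySet (S : Set ℕ) (t : ℕ) : Set ℕ :=
  {s ∈ S | ¬ ∃ u ∈ S, s = u + t}

/-- For `S` a numerical semigroup with gap set `Sᶜ`, `t` a nonzero element of `S`, and
`f` an arbitrary arithmetic function,
`∑_{g ∈ G(S)} (f(g+t) - f(g)) = ∑_{a ∈ Ap(S;t)} f(a) - ∑_{k=0}^{t-1} f(k)`. -/
theorem gap_sum_identity (S : Set ℕ) (hS : IsNumericalSemigroup S)
    (t : ℕ) (ht : t ∈ S) (ht0 : t ≠ 0) (f : ℕ → ℤ) :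
    (∑ᶠ g ∈ Sᶜ, (f (g + t) - f g))
      = (∑ᶠ a ∈ aperySet S t, f a) - ∑ k ∈ Finset.range t, f k := by
  classical
  obtain ⟨h0, hadd, hfin⟩ := hS
  set G : Finset ℕ := hfin.toFinset with hGdef
  have hGmem : ∀ n, n ∈ G ↔ n ∉ S := by
    intro n; simp [hGdef, Set.Finite.mem_toFinset]
  set T : Finset ℕ := G.image (· + t) with hTdef
  have hTmem : ∀ n, n ∈ T ↔ t ≤ n ∧ n - t ∉ S := by
    intro n
    simp only [hTdef, Finset.mem_image]
    constructor
    · rintro ⟨g, hg, rfl⟩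
      exact ⟨Nat.le_add_left _ _, by simpa [hGmem] using hg⟩
    · rintro ⟨h1, h2⟩
      exact ⟨n - t, (hGmem _).mpr h2, by omega⟩
  -- the Apéry set is finite
  have hApsub : aperySet S t ⊆ ↑(T ∪ Finset.range t) := by
    intro n hn
    obtain ⟨hnS, hnrep⟩ := hn
    simp only [Finset.coe_union, Set.mem_union, Finset.mem_coe, Finset.mem_range]
    by_cases hnt : t ≤ n
    · left
      rw [hTmem]
      refine ⟨hnt, fun hmem => hnrep ⟨n - t, hmem, by omega⟩⟩
    · right; omega
  have hApfin : (aperySet S t).Finite :=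
    Set.Finite.subset (Finset.finite_toSet _) hApsub
  set A : Finset ℕ := hApfin.toFinset with hAdef
  have hAmem : ∀ n, n ∈ A ↔ (n ∈ S ∧ ¬ ∃ u ∈ S, n = u + t) := by
    intro n; simp [hAdef, Set.Finite.mem_toFinset, aperySet]
  set M : ℕ := G.sup id + t + 1 with hMdef
  have hGbound : ∀ n ∈ G, n < M := by
    intro n hn
    have := Finset.le_sup (f := id) hn
    simp only [id] at this
    omega
  have hGsub : G ⊆ Finset.range M := fun n hn => Finset.mem_range.mpr (hGbound n hn)
  have hTsub : T ⊆ Finset.range M := by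
    intro n hn
    simp only [hTdef, Finset.mem_image] at hn
    obtain ⟨g, hg, rfl⟩ := hn
    have := Finset.le_sup (f := id) hg
    simp only [id] at this
    simp only [Finset.mem_range]; omega
  have hAsub : A ⊆ Finset.range M := by
    intro n hn
    rw [hAdef, Set.Finite.mem_toFinset] at hn
    have := hApsub hn
    simp only [Finset.coe_union, Set.mem_union, Finset.mem_coe, Finset.mem_range] at this
    rcases this with h | h
    · exact hTsub h
    · simp only [Finset.mem_range]; omega
  have hRsub : Finset.range t ⊆ Finset.range M := by
    apply Finset.range_subset_range.mpr; omega
  -- express sums over range M with indicators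
  have key : ∀ (X : Finset ℕ), X ⊆ Finset.range M →
      ∑ n ∈ X, f n = ∑ n ∈ Finset.range M, (if n ∈ X then f n else 0) := by
    intro X hX
    rw [Finset.sum_ite_mem, Finset.inter_eq_right.mpr hX]
  -- rewrite LHS
  rw [finsum_mem_eq_finite_toFinset_sum _ hfin,
      finsum_mem_eq_finite_toFinset_sum _ hApfin]
  show ∑ g ∈ G, (f (g + t) - f g) = ∑ a ∈ A, f a - ∑ k ∈ Finset.range t, f k
  have himg : ∑ g ∈ G, f (g + t) = ∑ n ∈ T, f n := by
    rw [hTdef, Finset.sum_image]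
    intro a _ b _ h
    simp only at h
    omega
  rw [Finset.sum_sub_distrib, himg, key T hTsub, key G hGsub, key A hAsub,
      key (Finset.range t) hRsub, ← Finset.sum_sub_distrib, ← Finset.sum_sub_distrib]
  apply Finset.sum_congr rfl
  intro n _
  simp only [hTmem, hGmem, hAmem, Finset.mem_range]
  have hrep : (∃ u ∈ S, n = u + t) ↔ (t ≤ n ∧ n - t ∈ S) := by
    constructor
    · rintro ⟨u, hu, rfl⟩; exact ⟨Nat.le_add_left _ _, by simpa using hu⟩
    · rintro ⟨h1, h2⟩; exact ⟨n - t, h2, by omega⟩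
  by_cases hnS : n ∈ S <;> by_cases hnt : t ≤ n
  · -- n ∈ S, t ≤ n
    by_cases hnt' : n - t ∈ S
    · simp [hnS, hnt, hnt', hrep, Finset.mem_range, Nat.not_lt.mpr hnt]
    · simp [hnS, hnt, hnt', hrep, Finset.mem_range, Nat.not_lt.mpr hnt]
  · -- n ∈ S, n < t
    have h1 : ¬ ∃ u ∈ S, n = u + t := by
      rintro ⟨u, _, rfl⟩; omega
    simp [hnS, hnt, h1, Finset.mem_range, Nat.lt_of_not_le hnt]
  · -- n ∉ S, t ≤ n
    have h2 : n - t ∉ S := by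
      intro h
      have := hadd _ h _ ht
      have : n ∈ S := by rwa [Nat.sub_add_cancel hnt] at this
      exact hnS this
    simp [hnS, hnt, h2, Finset.mem_range, Nat.not_lt.mpr hnt]
  · -- n ∉ S, n < t
    simp [hnS, hnt, Finset.mem_range, Nat.lt_of_not_le hnt]
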